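/- (Sakugawa–Seki, first identity) For s = (s_1,...,s_d) positive integers, w = s_1+...+s_d, l(i) = s_1+...+s_i, variables t_1,...,t_d, and n ≥ 1: ∑_{n ≥ n_1 ≥ ... ≥ n_d ≥ 1} (-1)^{n_1} C(n,n_1) t_1^{n_1-n_2} ··· t_{d-1}^{n_{d-1}-n_d} t_d^{n_d} / (n_1^{s_1} ··· n_d^{s_d}) = ∑_{n ≥ n_1 ≥ ... ≥ n_w ≥ 1} (1-t_1)^{n_{l(1)}-n_{l(1)+1}} ··· (1-t_{d-1})^{n_{l(d-1)}-n_{l(d-1)+1}} ((1-t_d)^{n_{l(d)}} - 1) / (n_1 ··· n_w). -/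

import Mathlib

set_option maxHeartbeats 1000000

/-- Weakly decreasing chains `hi ≥ f 0 ≥ f 1 ≥ ⋯ ≥ f (d-1) ≥ lo`. -/
def chainsIcc (d lo hi : ℕ) : Finset (Fin d → ℕ) :=
  (Fintype.piFinset fun _ : Fin d => Finset.Icc lo hi).filter
    fun f => ∀ i j : Fin d, i ≤ j → f j ≤ f i

/-- `idx f j` is the paper's `n_j` (1-indexed entry of the chain `f`). -/
def idx {w : ℕ} (f : Fin w → ℕ) (j : ℕ) : ℕ :=
  if h : j - 1 < w then f ⟨j - 1, h⟩ else 0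

def lsum (s : ℕ → ℕ) (i : ℕ) : ℕ := ∑ j ∈ Finset.range i, s j



namespace SS

lemma mem_chainsIcc {d lo hi : ℕ} {f : Fin d → ℕ} :
    f ∈ chainsIcc d lo hi ↔ (∀ i, f i ∈ Finset.Icc lo hi) ∧ ∀ i j : Fin d, i ≤ j → f j ≤ f i := by
  simp [chainsIcc, Fintype.mem_piFinset]

lemma chainsIcc_zero_sum {M : Type*} [AddCommMonoid M] (lo hi : ℕ) (F : (Fin 0 → ℕ) → M) :
    ∑ f ∈ chainsIcc 0 lo hi, F f = F ![] := by
  have h : chainsIcc 0 lo hi = {![]} := by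
    apply Finset.eq_singleton_iff_unique_mem.2
    constructor
    · simp [mem_chainsIcc]
      try exact fun i => i.elim0
    · intro x _; funext i; exact i.elim0
  rw [h, Finset.sum_singleton]

lemma peel {M : Type*} [AddCommMonoid M] (e n : ℕ) (F : (Fin (e+1) → ℕ) → M) :
    ∑ f ∈ chainsIcc (e+1) 1 n, F f
      = ∑ k ∈ Finset.Icc 1 n, ∑ g ∈ chainsIcc e 1 k, F (Fin.cons k g) := by
  rw [← Finset.sum_sigma (Finset.Icc 1 n) (fun k => chainsIcc e 1 k)
      (fun p => F (Fin.cons p.1 p.2))]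
  apply Finset.sum_nbij' (fun f => ⟨f 0, Fin.tail f⟩)
    (fun p => Fin.cons p.1 p.2)
  · intro f hf
    rw [mem_chainsIcc] at hf
    obtain ⟨h1, h2⟩ := hf
    refine Finset.mem_sigma.2 ⟨h1 0, ?_⟩
    rw [mem_chainsIcc]
    constructor
    · intro i
      have := (h1 i.succ)
      simp only [Finset.mem_Icc] at this ⊢
      exact ⟨this.1, h2 0 i.succ (Fin.zero_le _)⟩
    · intro i j hij
      exact h2 i.succ j.succ (by simpa using hij)
  · intro p hp
    obtain ⟨hk, hg⟩ := Finset.mem_sigma.1 hp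
    rw [mem_chainsIcc] at hg ⊢
    simp only [Finset.mem_Icc] at hk
    constructor
    · intro i
      refine Fin.cases ?_ ?_ i
      · simpa using hk
      · intro i'
        have := hg.1 i'
        simp only [Finset.mem_Icc, Fin.cons_succ] at this ⊢
        exact ⟨this.1, this.2.trans hk.2⟩
    · intro i j hij
      rcases Fin.eq_zero_or_eq_succ j with rfl | ⟨j', rfl⟩
      · have : i = 0 := le_antisymm (by simpa using hij) (Fin.zero_le _)
        simp [this]
      · rcases Fin.eq_zero_or_eq_succ i with rfl | ⟨i', rfl⟩
        · simp only [Fin.cons_succ, Fin.cons_zero]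
          have := hg.1 j'
          simp only [Finset.mem_Icc] at this
          exact this.2
        · simp only [Fin.cons_succ]
          exact hg.2 i' j' (by simpa using hij)
  · intro f hf; exact Fin.cons_self_tail f
  · intro p hp; simp
  · intro f hf; rw [Fin.cons_self_tail]


lemma idx_succ {w : ℕ} (f : Fin w → ℕ) (j : ℕ) (h : j < w) : idx f (j+1) = f ⟨j, h⟩ := by
  simp only [idx, Nat.add_sub_cancel]
  rw [dif_pos h]

lemma idx_zero_len (f : Fin 0 → ℕ) (j : ℕ) : idx f j = 0 := by
  simp [idx]

lemma idx_cons_one {w : ℕ} (k : ℕ) (g : Fin w → ℕ) : idx (Fin.cons k g) 1 = k := by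
  simp [idx]

lemma idx_cons_succ {w : ℕ} (k : ℕ) (g : Fin w → ℕ) (j : ℕ) (hj : 1 ≤ j) :
    idx (Fin.cons k g) (j + 1) = idx g j := by
  obtain ⟨j, rfl⟩ := Nat.exists_eq_add_of_le hj
  simp only [idx]
  by_cases h : j < w
  · rw [dif_pos (by omega), dif_pos (by omega)]
    have : (⟨1 + j + 1 - 1, by omega⟩ : Fin (w+1)) = Fin.succ ⟨1 + j - 1, by omega⟩ := by
      ext; simp; omega
    rw [this, Fin.cons_succ]
  · rw [dif_neg (by omega), dif_neg (by omega)]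

variable {A : Type*} [CommRing A] [Algebra ℚ A]

noncomputable def Dop (a : ℕ → A) : ℕ → A := fun k => ((k:ℚ)⁻¹) • a k
def Top (x : A) (a : ℕ → A) : ℕ → A := fun k => ∑ m ∈ Finset.Icc 1 k, x ^ (k - m) * a m
noncomputable def Iop (a : ℕ → A) : ℕ → A := fun n => ∑ j ∈ Finset.Icc 1 n, ((j:ℚ)⁻¹) • a j
noncomputable def Qop (y : A) (a : ℕ → A) : ℕ → A :=
  fun n => ∑ j ∈ Finset.Icc 1 n, ((j:ℚ)⁻¹) • (y ^ (n - j) * a j)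
noncomputable def Bin (a : ℕ → A) : ℕ → A :=
  fun n => ∑ k ∈ Finset.Icc 1 n, ((-1 : ℚ) ^ k * (n.choose k : ℚ)) • a k

lemma Dop_iterate (s : ℕ) (a : ℕ → A) (k : ℕ) :
    (Dop^[s] a) k = ((k:ℚ)^s)⁻¹ • a k := by
  induction s generalizing a with
  | zero => simp
  | succ s ih =>
      rw [Function.iterate_succ_apply, ih (Dop a)]
      simp only [Dop, pow_succ, smul_smul, mul_inv]
      try ring_nf

/-- scalar identity: C(n,k)/k = ∑_{j=k}^n C(j,k)/j, for 1 ≤ k. -/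
lemma choose_div_eq_sum (k : ℕ) (hk : 1 ≤ k) (n : ℕ) :
    (n.choose k : ℚ) / k = ∑ j ∈ Finset.Icc k n, (j.choose k : ℚ) / j := by
  induction n with
  | zero =>
      rw [Finset.Icc_eq_empty (by omega), Finset.sum_empty, Nat.choose_eq_zero_of_lt (by omega)]
      simp
  | succ n ih =>
      by_cases h : k ≤ n + 1
      · obtain ⟨k', rfl⟩ : ∃ k', k = k' + 1 := ⟨k - 1, by omega⟩
        rw [Finset.sum_Icc_succ_top h, ← ih]
        have hc : ((n+1) : ℚ) * (n.choose k' : ℚ) = ((n+1).choose (k'+1) : ℚ) * (k'+1) := by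
          exact_mod_cast congrArg (Nat.cast (R := ℚ)) (Nat.add_one_mul_choose_eq n k')
        have pascal : ((n+1).choose (k'+1) : ℚ) = n.choose k' + n.choose (k'+1) := by
          exact_mod_cast congrArg (Nat.cast (R := ℚ)) (Nat.choose_succ_succ n k')
        have hK : ((k' : ℚ) + 1) ≠ 0 := by positivity
        have hn1 : ((n : ℚ) + 1) ≠ 0 := by positivity
        push_cast
        rw [div_add_div _ _ hK hn1, div_eq_div_iff hK (mul_ne_zero hK hn1)]
        linear_combination ((k':ℚ)+1)*((n:ℚ)+1)*pascal + ((k':ℚ)+1)*hc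
      · rw [Finset.Icc_eq_empty (by omega), Finset.sum_empty,
          Nat.choose_eq_zero_of_lt (by omega)]
        simp


lemma swap_Icc {M : Type*} [AddCommMonoid M] (n : ℕ) (f : ℕ → ℕ → M) :
    ∑ k ∈ Finset.Icc 1 n, ∑ m ∈ Finset.Icc 1 k, f k m
      = ∑ m ∈ Finset.Icc 1 n, ∑ k ∈ Finset.Icc m n, f k m := by
  apply Finset.sum_comm'
  intro k m
  simp only [Finset.mem_Icc]
  omega

lemma Bin_Dop (a : ℕ → A) : Bin (Dop a) = Iop (Bin a) := by
  funext n
  simp only [Bin, Dop, Iop, Finset.smul_sum, smul_smul]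
  rw [swap_Icc n (fun j k => ((j:ℚ)⁻¹ * ((-1:ℚ)^k * (j.choose k : ℚ))) • a k)]
  apply Finset.sum_congr rfl
  intro k hk
  simp only [Finset.mem_Icc] at hk
  rw [← Finset.sum_smul]
  congr 1
  have h1 : ∑ j ∈ Finset.Icc k n, (j:ℚ)⁻¹ * ((-1:ℚ)^k * (j.choose k : ℚ))
      = (-1:ℚ)^k * ∑ j ∈ Finset.Icc k n, (j.choose k : ℚ) / j := by
    rw [Finset.mul_sum]
    apply Finset.sum_congr rfl
    intro j _
    rw [div_eq_mul_inv]
    ring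
  rw [h1, ← choose_div_eq_sum k hk.1 n]
  rw [div_eq_mul_inv]
  ring



lemma keyC (x : A) (m : ℕ) (hm : 1 ≤ m) (n : ℕ) :
    ∑ k ∈ Finset.Icc m n, (((-1:ℚ)^k * (n.choose k : ℚ)) / m) • x ^ (k - m)
      = ∑ j ∈ Finset.Icc m n, (((-1:ℚ)^m * (j.choose m : ℚ)) / j) • (1 - x) ^ (n - j) := by
  induction n with
  | zero => rw [Finset.Icc_eq_empty (by omega)]; simp
  | succ n ih =>
      rcases lt_or_ge (n+1) m with h | h
      · rw [Finset.Icc_eq_empty (by omega)]; simp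
      rcases eq_or_lt_of_le h with rfl | hmn
      · rw [Finset.Icc_self, Finset.sum_singleton, Finset.sum_singleton]
        simp
      have hmn' : m ≤ n := by omega
      set L := ∑ k ∈ Finset.Icc m n, (((-1:ℚ)^k * (n.choose k : ℚ)) / m) • x ^ (k - m) with hLdef
      set R := ∑ j ∈ Finset.Icc m n, (((-1:ℚ)^m * (j.choose m : ℚ)) / j) • (1 - x) ^ (n - j)
        with hRdef
      have expand : ∀ k ∈ Finset.Icc m (n+1),
          (((-1:ℚ)^k * ((n+1).choose k : ℚ)) / m) • x ^ (k - m)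
            = (((-1:ℚ)^k * (n.choose k : ℚ)) / m) • x ^ (k - m)
              + (((-1:ℚ)^k * (n.choose (k-1) : ℚ)) / m) • x ^ (k - m) := by
        intro k hk
        simp only [Finset.mem_Icc] at hk
        obtain ⟨k', rfl⟩ : ∃ k', k = k' + 1 := ⟨k - 1, by omega⟩
        simp only [Nat.add_sub_cancel]
        push_cast [Nat.choose_succ_succ']
        rw [← add_smul]
        congr 1
        ring
      have hpart1 : ∑ k ∈ Finset.Icc m (n+1), (((-1:ℚ)^k * (n.choose k : ℚ)) / m) • x ^ (k - m)
          = L := by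
        rw [Finset.sum_Icc_succ_top (show m ≤ n+1 by omega)]
        simp [Nat.choose_succ_self]
        rfl
      have hpart2 : ∑ k ∈ Finset.Icc m (n+1), (((-1:ℚ)^k * (n.choose (k-1) : ℚ)) / m) • x ^ (k - m)
          = (((-1:ℚ)^m * (n.choose (m-1) : ℚ)) / m) • 1 - x * L := by
        have hmap : Finset.Icc m (n+1) = (Finset.Icc (m-1) n).map (addRightEmbedding 1) := by
          rw [Finset.map_add_right_Icc]
          congr 1
          omega
        rw [hmap, Finset.sum_map]
        simp only [addRightEmbedding_apply, Nat.add_sub_cancel]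
        have hins : Finset.Icc (m-1) n = insert (m-1) (Finset.Icc m n) := by
          rw [← Finset.Ioc_insert_left (show m-1 ≤ n by omega)]
          congr 1
          rw [← Finset.Icc_add_one_left_eq_Ioc]
          congr 1
          omega
        rw [hins, Finset.sum_insert (by simp; omega)]
        have hterm : (((-1:ℚ)^(m-1+1) * (n.choose (m-1) : ℚ)) / m) • x ^ (m-1+1 - m)
            = (((-1:ℚ)^m * (n.choose (m-1) : ℚ)) / m) • 1 := by
          rw [show m-1+1 = m from by omega, show m - m = 0 from by omega, pow_zero]
        rw [hterm]
        have hrest : ∑ k' ∈ Finset.Icc m n,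
            (((-1:ℚ)^(k'+1) * (n.choose k' : ℚ)) / m) • x ^ (k'+1 - m)
              = - (x * L) := by
          rw [hLdef, Finset.mul_sum, ← Finset.sum_neg_distrib]
          apply Finset.sum_congr rfl
          intro k' hk'
          simp only [Finset.mem_Icc] at hk'
          rw [show k'+1-m = (k'-m)+1 from by omega, pow_succ, pow_succ]
          rw [mul_comm (x ^ (k' - m)) x, mul_smul_comm, ← neg_smul]
          congr 1
          ring
        rw [hrest]
        ring
      have hR : ∑ j ∈ Finset.Icc m (n+1), (((-1:ℚ)^m * (j.choose m : ℚ)) / j) • (1-x) ^ (n+1-j)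
          = (1-x) * R + (((-1:ℚ)^m * ((n+1).choose m : ℚ)) / (n+1)) • 1 := by
        rw [Finset.sum_Icc_succ_top (show m ≤ n+1 by omega)]
        rw [show n+1-(n+1) = 0 from by omega, pow_zero]
        congr 2
        · rw [hRdef, Finset.mul_sum]
          apply Finset.sum_congr rfl
          intro j hj
          simp only [Finset.mem_Icc] at hj
          rw [show n+1-j = (n-j)+1 from by omega, pow_succ, mul_smul_comm]
          congr 1
          ring
        · push_cast
          ring
      have hc : (((-1:ℚ)^m * (n.choose (m-1) : ℚ)) / m)
          = (((-1:ℚ)^m * ((n+1).choose m : ℚ)) / (n+1)) := by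
        obtain ⟨m', rfl⟩ : ∃ m', m = m'+1 := ⟨m-1, by omega⟩
        simp only [Nat.add_sub_cancel]
        have hc2 : ((n+1):ℚ) * (n.choose m' : ℚ) = ((n+1).choose (m'+1) : ℚ) * (m'+1) := by
          exact_mod_cast congrArg (Nat.cast (R := ℚ)) (Nat.add_one_mul_choose_eq n m')
        rw [div_eq_div_iff (by exact_mod_cast (Nat.succ_ne_zero m'))
          (by exact_mod_cast (Nat.succ_ne_zero n))]
        push_cast at hc2 ⊢
        linear_combination ((-1:ℚ)^(m'+1)) * hc2
      rw [Finset.sum_congr rfl expand, Finset.sum_add_distrib, hpart1, hpart2, hR, ih, hc]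
      ring



lemma Bin_Top_Dop (x : A) (a : ℕ → A) : Bin (Top x (Dop a)) = Qop (1-x) (Bin a) := by
  funext n
  simp only [Bin, Top, Dop, Qop, Finset.mul_sum, Finset.smul_sum, mul_smul_comm, smul_smul]
  rw [swap_Icc n (fun k m => (((-1:ℚ))^k * (n.choose k : ℚ) * (m:ℚ)⁻¹) • (x^(k-m) * a m)),
    swap_Icc n (fun j m => ((j:ℚ)⁻¹ * ((-1:ℚ)^m * (j.choose m : ℚ))) • ((1-x)^(n-j) * a m))]
  apply Finset.sum_congr rfl
  intro m hm
  simp only [Finset.mem_Icc] at hm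
  calc ∑ k ∈ Finset.Icc m n, ((-1:ℚ)^k * (n.choose k : ℚ) * (m:ℚ)⁻¹) • (x^(k-m) * a m)
      = (∑ k ∈ Finset.Icc m n, (((-1:ℚ)^k * (n.choose k : ℚ))/m) • x^(k-m)) * a m := by
        rw [Finset.sum_mul]
        apply Finset.sum_congr rfl
        intro k _
        rw [smul_mul_assoc, div_eq_mul_inv]
    _ = (∑ j ∈ Finset.Icc m n, (((-1:ℚ)^m * (j.choose m : ℚ))/j) • (1-x)^(n-j)) * a m := by
        rw [keyC x m hm.1 n]
    _ = ∑ j ∈ Finset.Icc m n, ((j:ℚ)⁻¹ * ((-1:ℚ)^m * (j.choose m : ℚ))) • ((1-x)^(n-j) * a m) := by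
        rw [Finset.sum_mul]
        apply Finset.sum_congr rfl
        intro j _
        rw [smul_mul_assoc, div_eq_mul_inv]
        congr 1
        ring

lemma Bin_pow (x : A) (n : ℕ) : Bin (fun k => x ^ k) n = (1 - x)^n - 1 := by
  simp only [Bin]
  have hterm : ∀ k, ((-1:ℚ)^k * (n.choose k : ℚ)) • x ^ k = (-x)^k * (n.choose k : A) := by
    intro k
    rw [Algebra.smul_def, map_mul, map_pow, map_neg, map_one, map_natCast, neg_pow]
    ring
  simp only [hterm]
  have hpow : (1 - x)^n = ∑ k ∈ Finset.range (n+1), (-x)^k * (n.choose k : A) := by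
    have h := add_pow (-x) 1 n
    simp only [one_pow, mul_one] at h
    rw [show (1 : A) - x = -x + 1 by ring, h]
  have hins : Finset.range (n+1) = insert 0 (Finset.Icc 1 n) := by
    ext a
    simp only [Finset.mem_range, Finset.mem_insert, Finset.mem_Icc]
    omega
  rw [hpow, hins, Finset.sum_insert (by simp)]
  simp



def pw (x : A) : ℕ → A := fun k => x ^ k
def fin (x : A) : ℕ → A := fun n => (1 - x)^n - 1

noncomputable def lnestf : ℕ → (ℕ → ℕ) → (ℕ → A) → (ℕ → A)
  | 0, _, t => pw (t 0)
  | 1, s, t => Dop^[s 0] (pw (t 0))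
  | (d+2), s, t => Dop^[s 0] (Top (t 0) (lnestf (d+1) (fun i => s (i+1)) (fun i => t (i+1))))

noncomputable def rnestf : ℕ → (ℕ → ℕ) → (ℕ → A) → (ℕ → A)
  | 0, _, t => fin (t 0)
  | 1, s, t => Iop^[s 0 - 1] (fin (t 0))
  | (d+2), s, t =>
      Iop^[s 0 - 1] (Qop (1 - t 0) (rnestf (d+1) (fun i => s (i+1)) (fun i => t (i+1))))

lemma Bin_Dop_iter (s : ℕ) (a : ℕ → A) : Bin (Dop^[s] a) = Iop^[s] (Bin a) := by
  induction s generalizing a with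
  | zero => rfl
  | succ s ih =>
      rw [Function.iterate_succ_apply, ih (Dop a), Bin_Dop, ← Function.iterate_succ_apply,
        Function.iterate_succ_apply']

lemma Bin_pw (x : A) : Bin (pw x) = fin x := by
  funext n
  exact Bin_pow x n

lemma SUB : ∀ d (s : ℕ → ℕ) (t : ℕ → A) (x : A), (∀ i ≤ d, 1 ≤ s i) →
    Bin (Top x (lnestf (d+1) s t)) = Qop (1-x) (rnestf (d+1) s t) := by
  intro d
  induction d with
  | zero =>
      intro s t x hs
      show Bin (Top x (Dop^[s 0] (pw (t 0)))) = Qop (1-x) (Iop^[s 0 - 1] (fin (t 0)))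
      rw [show s 0 = (s 0 - 1) + 1 from by have := hs 0 le_rfl; omega,
        Function.iterate_succ_apply', Bin_Top_Dop, Bin_Dop_iter, Bin_pw]
      rw [show s 0 - 1 + 1 - 1 = s 0 - 1 from by omega]
  | succ d ih =>
      intro s t x hs
      show Bin (Top x (Dop^[s 0] (Top (t 0)
          (lnestf (d+1) (fun i => s (i+1)) (fun i => t (i+1)))))) = _
      rw [show s 0 = (s 0 - 1) + 1 from by have := hs 0 (by omega); omega,
        Function.iterate_succ_apply', Bin_Top_Dop, Bin_Dop_iter,
        ih (fun i => s (i+1)) (fun i => t (i+1)) (t 0) (fun i hi => hs (i+1) (by omega))]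
      show _ = Qop (1-x) (Iop^[s 0 - 1 + 1 - 1] _)
      rw [show s 0 - 1 + 1 - 1 = s 0 - 1 from by omega]

lemma MAIN : ∀ d (s : ℕ → ℕ) (t : ℕ → A), (∀ i ≤ d, 1 ≤ s i) →
    Bin (lnestf (d+1) s t) = Iop (rnestf (d+1) s t) := by
  intro d
  cases d with
  | zero =>
      intro s t hs
      show Bin (Dop^[s 0] (pw (t 0))) = Iop (Iop^[s 0 - 1] (fin (t 0)))
      rw [Bin_Dop_iter, Bin_pw, show s 0 = (s 0 - 1) + 1 from by have := hs 0 le_rfl; omega,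
        Function.iterate_succ_apply']
      rw [show s 0 - 1 + 1 - 1 = s 0 - 1 from by omega]
  | succ d =>
      intro s t hs
      show Bin (Dop^[s 0] (Top (t 0)
          (lnestf (d+1) (fun i => s (i+1)) (fun i => t (i+1))))) = _
      rw [Bin_Dop_iter,
        SUB d (fun i => s (i+1)) (fun i => t (i+1)) (t 0) (fun i hi => hs (i+1) (by omega)),
        show s 0 = (s 0 - 1) + 1 from by have := hs 0 (by omega); omega,
        Function.iterate_succ_apply']
      show Iop (Iop^[s 0 - 1] _) = Iop (Iop^[s 0 - 1 + 1 - 1] _)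
      rw [show s 0 - 1 + 1 - 1 = s 0 - 1 from by omega]



end SS

namespace SS
variable {A : Type*} [CommRing A] [Algebra ℚ A]

lemma idx_cons_plus2 {w : ℕ} (k : ℕ) (g : Fin w → ℕ) (j : ℕ) :
    idx (Fin.cons k g) (j + 2) = idx g (j + 1) := idx_cons_succ k g (j+1) (by omega)

lemma idx_cons_two {w : ℕ} (k : ℕ) (g : Fin w → ℕ) :
    idx (Fin.cons k g) 2 = idx g 1 := idx_cons_succ k g 1 (by omega)

lemma N1 (e : ℕ) : ∀ (s : ℕ → ℕ) (t : ℕ → A) (k : ℕ),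
    lnestf (e+1) s t k
      = ((k:ℚ)^(s 0))⁻¹ • ∑ g ∈ chainsIcc e 1 k,
          (∏ j ∈ Finset.range e, ((idx g (j+1) : ℚ))^(s (j+1)))⁻¹ •
            ((t 0)^(k - idx g 1) *
              (∏ j ∈ Finset.range (e-1), (t (j+1))^(idx g (j+1) - idx g (j+2))) *
              (t e)^(idx g e)) := by
  induction e with
  | zero =>
      intro s t k
      show (Dop^[s 0] (pw (t 0))) k = _
      rw [chainsIcc_zero_sum 1 k]
      rw [Dop_iterate]
      simp [pw, idx_zero_len]
  | succ e ih =>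
      intro s t k
      show (Dop^[s 0] (Top (t 0) (lnestf (e+1) (fun i => s (i+1)) (fun i => t (i+1))))) k = _
      rw [Dop_iterate, peel e k]
      congr 1
      simp only [Top]
      apply Finset.sum_congr rfl
      intro m hm
      rw [ih (fun i => s (i+1)) (fun i => t (i+1)) m]
      rw [mul_smul_comm, Finset.mul_sum, Finset.smul_sum]
      apply Finset.sum_congr rfl
      intro g hg
      have hP1 : ∏ j ∈ Finset.range (e+1), ((idx (Fin.cons m g) (j+1) : ℚ))^(s (j+1))
          = (m:ℚ)^(s 1) * ∏ j ∈ Finset.range e, ((idx g (j+1) : ℚ))^(s (j+2)) := by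
        rw [Finset.prod_range_succ']
        rw [mul_comm]
        refine congrArg₂ (· * ·) ?_ ?_
        · rw [idx_cons_one]
        · apply Finset.prod_congr rfl
          intro j _
          rw [idx_cons_succ _ _ (j+1) (by omega)]
      have hsplit : (∏ j ∈ Finset.range e,
              (t (j+1))^(idx (Fin.cons m g) (j+1) - idx (Fin.cons m g) (j+2)))
            * (t (e+1))^(idx (Fin.cons m g) (e+1))
          = (t 1)^(m - idx g 1)
            * (∏ j ∈ Finset.range (e-1), (t (j+2))^(idx g (j+1) - idx g (j+2)))
            * (t (e+1))^(idx g e) := by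
        cases e with
        | zero =>
            simp [idx_cons_one, idx_zero_len]
        | succ e' =>
            simp only [Finset.prod_range_succ', Nat.add_sub_cancel]
            simp only [zero_add, show ∀ n:ℕ, n+1+1 = n+2 from fun n => rfl]
            simp only [idx_cons_one, idx_cons_plus2, idx_cons_two]
            ring
      simp only [zero_add, show ∀ n:ℕ, n+1+1 = n+2 from fun n => rfl, Nat.add_sub_cancel]
      rw [idx_cons_one, hP1, mul_inv]
      conv_rhs => rw [mul_assoc, hsplit]
      rw [mul_smul_comm, smul_smul]
      try congr 1
      try ring

end SS

namespace SS
variable {A : Type*} [CommRing A] [Algebra ℚ A]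

lemma lsum_succ' (s : ℕ → ℕ) (n : ℕ) :
    lsum s (n+1) = lsum (fun i => s (i+1)) n + s 0 := Finset.sum_range_succ' s n

lemma lsum_pos (s : ℕ → ℕ) (h1 : 1 ≤ s 0) (r : ℕ) : 1 ≤ lsum s (r+1) := by
  rw [lsum_succ']; omega

noncomputable def rbase : ℕ → (ℕ → ℕ) → (ℕ → A) → (ℕ → A)
  | 0, _, t => fin (t 0)
  | (d+1), s, t => Qop (1 - t 0) (rnestf (d+1) (fun i => s (i+1)) (fun i => t (i+1)))

lemma rnestf_eq (d : ℕ) (s : ℕ → ℕ) (t : ℕ → A) :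
    rnestf (d+1) s t = Iop^[s 0 - 1] (rbase d s t) := by
  cases d <;> rfl

lemma rbase_update (d : ℕ) (s : ℕ → ℕ) (t : ℕ → A) (v : ℕ) :
    rbase d (Function.update s 0 v) t = rbase d s t := by
  cases d with
  | zero => rfl
  | succ d =>
      have harg : (fun i => Function.update s 0 v (i+1)) = (fun i => s (i+1)) :=
        funext fun i => Function.update_of_ne (Nat.succ_ne_zero i) v s
      show Qop (1 - t 0)
          (rnestf (d+1) (fun i => Function.update s 0 v (i+1)) (fun i => t (i+1))) = _
      rw [harg]
      rfl

lemma lsum_update (s : ℕ → ℕ) (v : ℕ) (r : ℕ) :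
    lsum (Function.update s 0 v) (r+1) = lsum s (r+1) - s 0 + v := by
  rw [lsum_succ', lsum_succ']
  have h1 : (fun i => Function.update s 0 v (i+1)) = (fun i => s (i+1)) :=
    funext fun i => Function.update_of_ne (Nat.succ_ne_zero i) v s
  rw [h1, Function.update_self]
  omega

end SS

namespace SS
variable {A : Type*} [CommRing A] [Algebra ℚ A]

lemma N2 : ∀ (W d : ℕ) (s : ℕ → ℕ) (t : ℕ → A), lsum s (d+1) = W → (∀ i ≤ d, 1 ≤ s i) → ∀ k,
    rnestf (d+1) s t k
      = ∑ g ∈ chainsIcc (lsum s (d+1) - 1) 1 k,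
          (∏ j ∈ Finset.range (lsum s (d+1) - 1), ((idx g (j+1) : ℚ)))⁻¹ •
            ((∏ r ∈ Finset.range d,
                (1 - t r)^(idx (Fin.cons k g) (lsum s (r+1))
                  - idx (Fin.cons k g) (lsum s (r+1) + 1))) *
              ((1 - t d)^(idx (Fin.cons k g) (lsum s (d+1))) - 1)) := by
  intro W
  induction W using Nat.strong_induction_on with
  | _ W IH =>
    intro d s t hW hs k
    have hs0 : 1 ≤ s 0 := hs 0 (by omega)
    rcases Nat.lt_or_ge (s 0) 2 with hlt | h2
    · have h1 : s 0 = 1 := by omega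
      cases d with
      | zero =>
          have hl : lsum s (0+1) = 1 := by rw [lsum_succ']; simp [lsum, h1]
          rw [rnestf_eq, h1, hl]
          simp only [Nat.sub_self, Function.iterate_zero, id_eq]
          rw [chainsIcc_zero_sum 1 k]
          simp [rbase, fin, idx_cons_one]
          rfl
      | succ d =>
          have hsplitW : lsum s (d+1+1) = lsum (fun i => s (i+1)) (d+1) + 1 := by
            rw [lsum_succ', h1]
          have hL' : 1 ≤ lsum (fun i => s (i+1)) (d+1) :=
            lsum_pos _ (hs 1 (by omega)) d
          rw [rnestf_eq, h1]
          simp only [Nat.sub_self, Function.iterate_zero, id_eq]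
          show Qop (1 - t 0) (rnestf (d+1) (fun i => s (i+1)) (fun i => t (i+1))) k = _
          simp only [Qop]
          have hIH := IH (lsum (fun i => s (i+1)) (d+1)) (by omega) d
            (fun i => s (i+1)) (fun i => t (i+1)) rfl (fun i hi => hs (i+1) (by omega))
          rw [show lsum s (d+1+1) - 1 = (lsum (fun i => s (i+1)) (d+1) - 1) + 1 from by omega,
            peel]
          apply Finset.sum_congr rfl
          intro m hm
          rw [hIH m, Finset.mul_sum, Finset.smul_sum]
          apply Finset.sum_congr rfl
          intro g hg
          -- scalar product fact
          have hP : ∏ j ∈ Finset.range ((lsum (fun i => s (i+1)) (d+1) - 1) + 1),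
              ((idx (Fin.cons m g) (j+1) : ℚ))
              = (m:ℚ) * ∏ j ∈ Finset.range (lsum (fun i => s (i+1)) (d+1) - 1),
                  ((idx g (j+1) : ℚ)) := by
            rw [Finset.prod_range_succ', mul_comm]
            refine congrArg₂ (· * ·) ?_ ?_
            · rw [idx_cons_one]
            · apply Finset.prod_congr rfl
              intro j _
              rw [idx_cons_succ _ _ (j+1) (by omega)]
          -- boundary product fact
          have hB : ∏ r ∈ Finset.range (d+1),
              (1 - t r)^(idx (Fin.cons k (Fin.cons m g)) (lsum s (r+1))
                - idx (Fin.cons k (Fin.cons m g)) (lsum s (r+1) + 1))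
              = (1 - t 0)^(k - m)
                * ∏ r ∈ Finset.range d,
                  (1 - (t (r+1)))^(idx (Fin.cons m g) (lsum (fun i => s (i+1)) (r+1))
                    - idx (Fin.cons m g) (lsum (fun i => s (i+1)) (r+1) + 1)) := by
            rw [Finset.prod_range_succ', mul_comm]
            congr 1
            · have hl1 : lsum s (0+1) = 1 := by rw [lsum_succ']; simp [lsum, h1]
              rw [hl1, idx_cons_one, show (1:ℕ)+1 = 0+2 from rfl, idx_cons_plus2, idx_cons_one]
            · apply Finset.prod_congr rfl
              intro r _
              have hlr : lsum s (r+1+1) = lsum (fun i => s (i+1)) (r+1) + 1 := by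
                rw [lsum_succ', h1]
              have hp1 : 1 ≤ lsum (fun i => s (i+1)) (r+1) := lsum_pos _ (hs 1 (by omega)) r
              rw [hlr, idx_cons_succ _ _ _ (by omega), idx_cons_succ _ _ _ (by omega)]
          have hF : idx (Fin.cons k (Fin.cons m g)) (lsum s (d+1+1))
              = idx (Fin.cons m g) (lsum (fun i => s (i+1)) (d+1)) := by
            rw [hsplitW, idx_cons_succ _ _ _ (by omega)]
          rw [hP, hB, hF, mul_inv, mul_assoc, mul_smul_comm, smul_smul]
    · -- I-step : s 0 ≥ 2
      have hW2 : 2 ≤ W := by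
        have : lsum s (d+1) = lsum (fun i => s (i+1)) d + s 0 := lsum_succ' s d
        omega
      set s' := Function.update s 0 (s 0 - 1) with hs'def
      have hs'0 : s' 0 = s 0 - 1 := Function.update_self 0 (s 0 - 1) s
      have hs'cond : ∀ i ≤ d, 1 ≤ s' i := by
        intro i hi
        rcases eq_or_ne i 0 with rfl | hne
        · omega
        · rw [hs'def, Function.update_of_ne hne]
          exact hs i hi
      have hsle : s 0 ≤ lsum s (d+1) := by
        have := lsum_succ' s d
        omega
      have hWs' : lsum s' (d+1) = W - 1 := by
        rw [hs'def, lsum_update]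
        omega
      have hlpos : ∀ r, 1 ≤ lsum s' (r+1) := fun r => lsum_pos s' (by omega) r
      have hlrel : ∀ r, lsum s (r+1) = lsum s' (r+1) + 1 := by
        intro r
        have := lsum_update s (s 0 - 1) r
        rw [← hs'def] at this
        have h2' : s 0 ≤ lsum s (r+1) := by
          have : lsum s (r+1) = lsum (fun i => s (i+1)) r + s 0 := lsum_succ' s r
          omega
        omega
      have hrn : rnestf (d+1) s t k = Iop (rnestf (d+1) s' t) k := by
        rw [rnestf_eq, rnestf_eq, hs'def, rbase_update, ← hs'def, hs'0,
          show s 0 - 1 = (s 0 - 1 - 1) + 1 from by omega, Function.iterate_succ_apply']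
        rw [show s 0 - 1 - 1 + 1 - 1 = s 0 - 1 - 1 from by omega]
      rw [hrn]
      simp only [Iop]
      have hIH := IH (W-1) (by omega) d s' t hWs' hs'cond
      rw [show lsum s (d+1) - 1 = (lsum s' (d+1) - 1) + 1 from by omega, peel]
      apply Finset.sum_congr rfl
      intro m hm
      rw [hIH m, Finset.smul_sum]
      apply Finset.sum_congr rfl
      intro g hg
      have hP : ∏ j ∈ Finset.range ((lsum s' (d+1) - 1) + 1), ((idx (Fin.cons m g) (j+1) : ℚ))
          = (m:ℚ) * ∏ j ∈ Finset.range (lsum s' (d+1) - 1), ((idx g (j+1) : ℚ)) := by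
        rw [Finset.prod_range_succ', mul_comm]
        refine congrArg₂ (· * ·) ?_ ?_
        · rw [idx_cons_one]
        · apply Finset.prod_congr rfl
          intro j _
          rw [idx_cons_succ _ _ (j+1) (by omega)]
      have hB : ∏ r ∈ Finset.range d,
          (1 - t r)^(idx (Fin.cons k (Fin.cons m g)) (lsum s (r+1))
            - idx (Fin.cons k (Fin.cons m g)) (lsum s (r+1) + 1))
          = ∏ r ∈ Finset.range d,
            (1 - t r)^(idx (Fin.cons m g) (lsum s' (r+1))
              - idx (Fin.cons m g) (lsum s' (r+1) + 1)) := by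
        apply Finset.prod_congr rfl
        intro r _
        rw [hlrel r, idx_cons_succ _ _ _ (by have := hlpos r; omega),
          idx_cons_succ _ _ _ (by have := hlpos r; omega)]
      have hF : idx (Fin.cons k (Fin.cons m g)) (lsum s (d+1))
          = idx (Fin.cons m g) (lsum s' (d+1)) := by
        rw [hlrel d, idx_cons_succ _ _ _ (by have := hlpos d; omega)]
      rw [hP, hB, hF, mul_inv, smul_smul]

end SS

theorem sakugawa_seki_first {A : Type*} [CommRing A] [Algebra ℚ A]
    (d : ℕ) (hd : 1 ≤ d) (s : ℕ → ℕ) (hs : ∀ i < d, 1 ≤ s i)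
    (t : ℕ → A) (n : ℕ) (hn : 1 ≤ n) :
    ∑ m ∈ chainsIcc d 1 n,
        (((-1 : ℚ) ^ (idx m 1) * (n.choose (idx m 1) : ℚ)) *
            (∏ j ∈ Finset.range d, (idx m (j + 1) : ℚ) ^ s j)⁻¹) •
          ((∏ j ∈ Finset.range (d - 1), t j ^ (idx m (j + 1) - idx m (j + 2))) *
            t (d - 1) ^ (idx m d))
      = ∑ f ∈ chainsIcc (lsum s d) 1 n,
          (∏ j ∈ Finset.range (lsum s d), (idx f (j + 1) : ℚ))⁻¹ •
            ((∏ r ∈ Finset.range (d - 1),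
                (1 - t r) ^ (idx f (lsum s (r + 1)) - idx f (lsum s (r + 1) + 1))) *
              ((1 - t (d - 1)) ^ (idx f (lsum s d)) - 1)) := by
  obtain ⟨e, rfl⟩ : ∃ e, d = e + 1 := ⟨d - 1, by omega⟩
  have hscond : ∀ i ≤ e, 1 ≤ s i := fun i hi => hs i (by omega)
  simp only [Nat.add_sub_cancel]
  have hmain := congrFun (SS.MAIN e s t hscond) n
  have hLconv : ∑ m ∈ chainsIcc (e+1) 1 n,
        (((-1 : ℚ) ^ (idx m 1) * (n.choose (idx m 1) : ℚ)) *
            (∏ j ∈ Finset.range (e+1), (idx m (j + 1) : ℚ) ^ s j)⁻¹) •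
          ((∏ j ∈ Finset.range e, t j ^ (idx m (j + 1) - idx m (j + 2))) *
            t e ^ (idx m (e+1)))
      = SS.Bin (SS.lnestf (e+1) s t) n := by
    rw [SS.peel e n]
    simp only [SS.Bin]
    apply Finset.sum_congr rfl
    intro k hk
    rw [SS.N1 e s t k, Finset.smul_sum, Finset.smul_sum]
    apply Finset.sum_congr rfl
    intro g hg
    have hP : ∏ j ∈ Finset.range (e+1), ((idx (Fin.cons k g) (j+1) : ℚ))^(s j)
        = (k:ℚ)^(s 0) * ∏ j ∈ Finset.range e, ((idx g (j+1) : ℚ))^(s (j+1)) := by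
      rw [Finset.prod_range_succ', mul_comm]
      refine congrArg₂ (· * ·) ?_ ?_
      · rw [SS.idx_cons_one]
      · apply Finset.prod_congr rfl
        intro j _
        rw [SS.idx_cons_succ _ _ (j+1) (by omega)]
    have hsplit : (∏ j ∈ Finset.range e,
            (t j)^(idx (Fin.cons k g) (j+1) - idx (Fin.cons k g) (j+2)))
          * (t e)^(idx (Fin.cons k g) (e+1))
        = (t 0)^(k - idx g 1)
          * (∏ j ∈ Finset.range (e-1), (t (j+1))^(idx g (j+1) - idx g (j+2)))
          * (t e)^(idx g e) := by
      cases e with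
      | zero => simp [SS.idx_cons_one, SS.idx_zero_len]
      | succ e' =>
          simp only [Finset.prod_range_succ', Nat.add_sub_cancel]
          simp only [zero_add, show ∀ n:ℕ, n+1+1 = n+2 from fun n => rfl]
          simp only [SS.idx_cons_one, SS.idx_cons_plus2, SS.idx_cons_two]
          ring
    rw [SS.idx_cons_one, hP, mul_inv]
    conv_lhs => rw [hsplit]
    rw [smul_smul, smul_smul]
    congr 1
    ring
  have hw1 : 1 ≤ lsum s (e+1) := SS.lsum_pos s (hscond 0 (by omega)) e
  obtain ⟨L, hL⟩ : ∃ L, lsum s (e+1) = L + 1 := ⟨lsum s (e+1) - 1, by omega⟩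
  have hN2 := fun k => SS.N2 (lsum s (e+1)) e s t rfl hscond k
  rw [hL] at hN2
  simp only [Nat.add_sub_cancel] at hN2
  have hRconv : ∑ f ∈ chainsIcc (lsum s (e+1)) 1 n,
        (∏ j ∈ Finset.range (lsum s (e+1)), (idx f (j + 1) : ℚ))⁻¹ •
          ((∏ r ∈ Finset.range e,
              (1 - t r) ^ (idx f (lsum s (r + 1)) - idx f (lsum s (r + 1) + 1))) *
            ((1 - t e) ^ (idx f (lsum s (e+1))) - 1))
      = SS.Iop (SS.rnestf (e+1) s t) n := by
    rw [hL]
    rw [SS.peel L n]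
    simp only [SS.Iop]
    apply Finset.sum_congr rfl
    intro k hk
    rw [hN2 k, Finset.smul_sum]
    apply Finset.sum_congr rfl
    intro g hg
    have hP : ∏ j ∈ Finset.range (L+1), ((idx (Fin.cons k g) (j+1) : ℚ))
        = (k:ℚ) * ∏ j ∈ Finset.range L, ((idx g (j+1) : ℚ)) := by
      rw [Finset.prod_range_succ', mul_comm]
      refine congrArg₂ (· * ·) ?_ ?_
      · rw [SS.idx_cons_one]
      · apply Finset.prod_congr rfl
        intro j _
        rw [SS.idx_cons_succ _ _ (j+1) (by omega)]
    rw [hP, mul_inv, smul_smul]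
  rw [hLconv, hRconv, hmain]
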